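/- arXiv:1803.09141 — 4 statements merged into one kernel-verified Lean document; each statement's English description precedes it below -/
import Mathlib

section
/- If G is a graph, v a vertex of G with exactly k neighbors, and 𝓗 = (L,H) is a k-fold cover of G (each L(u) has size k, H[L(u)] is a clique, and edges between L(u) and L(w) form a matching present only when u=w or uw ∈ E(G)), then there are at most k! independent sets I in H restricted to the union of L(u) over neighbors u of v such that |I| = k, I meets each neighbor's list exactly once, and every vertex of L(v) is adjacent in H to some vertex of I. -/
open SimpleGraph Finset

/-- A cover `(L, H)` of a graph `G`: the lists `L u` partition `V(H)`, each `H[L u]` is a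
clique, edges of `H` between lists occur only within a list or along edges of `G`, and for
each edge of `G` the cross-edges form a matching. -/
structure DPCover {V : Type*} {W : Type*} (G : SimpleGraph V) (H : SimpleGraph W)
    (L : V → Finset W) : Prop where
  partition : ∀ w : W, ∃! u : V, w ∈ L u
  clique : ∀ u : V, ∀ a ∈ L u, ∀ b ∈ L u, a ≠ b → H.Adj a b
  cross : ∀ a b : W, H.Adj a b → ∀ u v : V, a ∈ L u → b ∈ L v → u = v ∨ G.Adj u v
  matching : ∀ u v : V, G.Adj u v → ∀ a ∈ L u, ∀ b ∈ L v, ∀ b' ∈ L v,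
    H.Adj a b → H.Adj a b' → b = b'

/-- An `𝓗`-coloring: a choice of one vertex from each list forming an independent set in `H`. -/
def IsHColoring {V : Type*} {W : Type*} (H : SimpleGraph W) (L : V → Finset W)
    (c : V → W) : Prop :=
  (∀ u : V, c u ∈ L u) ∧ ∀ u v : V, u ≠ v → ¬ H.Adj (c u) (c v)

/-- `G` is DP-`k`-colorable: every `k`-fold cover admits an `𝓗`-coloring (every `k`-fold
cover is isomorphic to one whose vertex set lives in `V × ℕ`). -/
def DPColorable {V : Type*} (G : SimpleGraph V) (k : ℕ) : Prop :=
  ∀ (H : SimpleGraph (V × ℕ)) (L : V → Finset (V × ℕ)),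
    DPCover G H L → (∀ u, (L u).card = k) → ∃ c, IsHColoring H L c

/-- The DP-chromatic number: the least `k` such that `G` is DP-`k`-colorable. -/
noncomputable def chiDP {V : Type*} (G : SimpleGraph V) : ℕ := sInf {k | DPColorable G k}

/-- The complete bipartite graph `K_{k,t}`. -/
def Kb (k t : ℕ) : SimpleGraph (Fin k ⊕ Fin t) := completeBipartiteGraph (Fin k) (Fin t)

/-- **Lemma 5 (bad-set bound).** If `v` has exactly `k` neighbors and `(L,H)` is a `k`-fold
cover, then at most `k!` independent sets in `H` restricted to `⋃_{u ∈ N(v)} L u`, meeting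
each neighbor's list exactly once, are bad for `v`. -/
theorem stmt_0 {V : Type*} {W : Type*} [Fintype V] [DecidableEq V] [DecidableEq W]
    (G : SimpleGraph V) [DecidableRel G.Adj] (H : SimpleGraph W) (L : V → Finset W)
    (k : ℕ) (v : V) (hdeg : (G.neighborFinset v).card = k)
    (hcov : DPCover G H L) (hfold : ∀ u, (L u).card = k) :
    {I : Finset W |
        I ⊆ (G.neighborFinset v).biUnion L ∧
        I.card = k ∧
        (∀ u ∈ G.neighborFinset v, (I ∩ L u).card = 1) ∧
        (∀ a ∈ I, ∀ b ∈ I, a ≠ b → ¬ H.Adj a b) ∧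
        (∀ w ∈ L v, ∃ x ∈ I, H.Adj w x)}.ncard ≤ k.factorial := by
  classical
  set S : Set (Finset W) := {I : Finset W |
        I ⊆ (G.neighborFinset v).biUnion L ∧
        I.card = k ∧
        (∀ u ∈ G.neighborFinset v, (I ∩ L u).card = 1) ∧
        (∀ a ∈ I, ∀ b ∈ I, a ≠ b → ¬ H.Adj a b) ∧
        (∀ w ∈ L v, ∃ x ∈ I, H.Adj w x)} with hSdef
  -- uniqueness of the neighbor in a fixed list `L u` adjacent to a given `w ∈ L v`
  have uniqX : ∀ u ∈ G.neighborFinset v, ∀ w ∈ L v, ∀ a ∈ L u, ∀ b ∈ L u,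
      H.Adj w a → H.Adj w b → a = b := by
    intro u hu w hw a ha b hb h1 h2
    exact hcov.matching v u ((G.mem_neighborFinset v u).mp hu) w hw a ha b hb h1 h2
  -- uniqueness of the vertex of `L v` adjacent to a given vertex of `L u`
  have uniqW : ∀ u ∈ G.neighborFinset v, ∀ a ∈ L u, ∀ w ∈ L v, ∀ w' ∈ L v,
      H.Adj w a → H.Adj w' a → w = w' := by
    intro u hu a ha w hw w' hw' h1 h2
    exact hcov.matching u v ((G.mem_neighborFinset v u).mp hu).symm a ha w hw w' hw'
      h1.symm h2.symm
  -- choose, for each bad set `I` and each `w ∈ L v`, a neighbor list containing a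
  -- vertex of `I` adjacent to `w`
  have exP : ∀ I : S, ∀ w : {w // w ∈ L v},
      ∃ u : {u // u ∈ G.neighborFinset v}, ∃ y, y ∈ (I : Finset W) ∧ y ∈ L u.1 ∧
        H.Adj w.1 y := by
    rintro ⟨I, h1, h2, h3, h4, h5⟩ ⟨w, hw⟩
    obtain ⟨y, hyI, hadj⟩ := h5 w hw
    obtain ⟨u, huN, hyu⟩ := Finset.mem_biUnion.mp (h1 hyI)
    exact ⟨⟨u, huN⟩, y, hyI, hyu, hadj⟩
  choose g x hxI hxL hadj using exP
  -- `I ∩ L (g I w)` is the singleton `{x I w}`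
  have hsing : ∀ I : S, ∀ w, ((I : Finset W) ∩ L (g I w).1) = {x I w} := by
    intro I w
    have h3 := I.2.2.2.1
    obtain ⟨a, ha⟩ := Finset.card_eq_one.mp (h3 (g I w).1 (g I w).2)
    have hx : x I w ∈ (I : Finset W) ∩ L (g I w).1 :=
      Finset.mem_inter.mpr ⟨hxI I w, hxL I w⟩
    rw [ha] at hx ⊢
    rw [Finset.mem_singleton] at hx
    rw [hx]
  -- each `g I` is injective
  have ginj : ∀ I : S, Function.Injective (g I) := by
    intro I w w' h
    have e1 := hsing I w
    have e2 := hsing I w'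
    rw [h] at e1
    have hxx : x I w = x I w' := by
      have := e1.symm.trans e2
      exact Finset.singleton_injective this
    apply Subtype.ext
    have hadj' : H.Adj w.1 (x I w') := hxx ▸ hadj I w
    exact uniqW (g I w').1 (g I w').2 (x I w') (hxL I w') w.1 w.2 w'.1 w'.2
      hadj' (hadj I w')
  -- equal `g`'s give equal bad sets
  have gdet : ∀ I I' : S, g I = g I' → (I : Finset W) ⊆ (I' : Finset W) := by
    intro I I' hgg y hy
    obtain ⟨u, huN, hyu⟩ := Finset.mem_biUnion.mp (I.2.1 hy)
    -- `g I` is surjective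
    have hbij : Function.Bijective (g I) := by
      refine (Fintype.bijective_iff_injective_and_card (g I)).mpr ⟨ginj I, ?_⟩
      rw [Fintype.card_coe, Fintype.card_coe, hfold, hdeg]
    obtain ⟨w, hw⟩ := hbij.2 ⟨u, huN⟩
    have e1 := hsing I w
    have e2 := hsing I' w
    rw [hw] at e1
    rw [← hgg, hw] at e2
    -- `y` is the unique element of `I ∩ L u`
    have hy' : y ∈ (I : Finset W) ∩ L u := Finset.mem_inter.mpr ⟨hy, hyu⟩
    rw [e1, Finset.mem_singleton] at hy'
    -- `x I w = x I' w` by matching uniqueness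
    have hxx : x I w = x I' w := by
      have hL1 : x I w ∈ L u := by have := hxL I w; rwa [hw] at this
      have hL2 : x I' w ∈ L u := by have := hxL I' w; rwa [← hgg, hw] at this
      exact uniqX u huN w.1 w.2 (x I w) hL1 (x I' w) hL2 (hadj I w) (hadj I' w)
    have : x I' w ∈ (I' : Finset W) ∩ L u := by rw [e2]; exact Finset.mem_singleton_self _
    rw [hy', hxx]
    exact (Finset.mem_inter.mp this).1
  -- bundle into an injective map to embeddings
  let F : S → ({w // w ∈ L v} ↪ {u // u ∈ G.neighborFinset v}) :=
    fun I => ⟨g I, ginj I⟩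
  have Finj : Function.Injective F := by
    intro I I' h
    have hgg : g I = g I' := congrArg (fun e => e.toFun) h
    exact Subtype.ext (le_antisymm (gdet I I' hgg) (gdet I' I hgg.symm))
  calc S.ncard = Nat.card S := (Nat.card_coe_set_eq S).symm
    _ ≤ Nat.card ({w // w ∈ L v} ↪ {u // u ∈ G.neighborFinset v}) :=
        Nat.card_le_card_of_injective F Finj
    _ = Fintype.card ({w // w ∈ L v} ↪ {u // u ∈ G.neighborFinset v}) :=
        Nat.card_eq_fintype_card
    _ = (Fintype.card {u // u ∈ G.neighborFinset v}).descFactorial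
          (Fintype.card {w // w ∈ L v}) := Fintype.card_embedding_eq
    _ = k.descFactorial k := by rw [Fintype.card_coe, Fintype.card_coe, hfold, hdeg]
    _ = k.factorial := Nat.descFactorial_self k
end

section
/- For every natural number k ≥ 1 and every natural number t with t < k^k / k!, the DP-chromatic number of the complete bipartite graph K_{k,t} is at most k; that is, for every k-fold cover 𝓗 = (L,H) of K_{k,t}, there exists an independent set in H meeting each list L(v) exactly once. -/
open SimpleGraph Finset

/-- **Theorem 4 (lower bound).** If `t < k^k / k!` then every `k`-fold cover of `K_{k,t}`
admits an `𝓗`-coloring, i.e. `χ_DP(K_{k,t}) ≤ k`. -/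
theorem stmt_1 (k t : ℕ) (hk : 1 ≤ k)
    (ht : (t : ℝ) < (k : ℝ) ^ k / (k.factorial : ℝ))
    {W : Type*} (H : SimpleGraph W) (L : Fin k ⊕ Fin t → Finset W)
    (hcov : DPCover (Kb k t) H L) (hfold : ∀ u, (L u).card = k) :
    ∃ c : Fin k ⊕ Fin t → W, IsHColoring H L c := by
  classical
  -- integer form of the hypothesis
  have hlt : t * k.factorial < k ^ k := by
    have hf : (0:ℝ) < (k.factorial : ℝ) := by positivity
    have := (lt_div_iff₀ hf).mp ht
    exact_mod_cast this
  -- the set of left transversals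
  set T : Finset (Fin k → W) := Fintype.piFinset (fun a => L (Sum.inl a)) with hTdef
  have hTcard : T.card = k ^ k := by
    simp [hTdef, Fintype.card_piFinset, hfold]
  -- bad transversals for a right vertex b
  set Bad : Fin t → Finset (Fin k → W) :=
    fun b => T.filter (fun f => ∀ w ∈ L (Sum.inr b), ∃ a, H.Adj (f a) w) with hBaddef
  have hadjG : ∀ (a : Fin k) (b : Fin t), (Kb k t).Adj (Sum.inl a) (Sum.inr b) := by
    intro a b
    simp [Kb]
  have hBadcard : ∀ b, (Bad b).card ≤ k.factorial := by
    intro b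
    have hcards : Fintype.card {x // x ∈ L (Sum.inr b)} = Fintype.card (Fin k) := by
      simp [Fintype.card_coe, hfold]
    -- map each bad transversal to an embedding L(inr b) ↪ Fin k
    have key : ∀ f ∈ Bad b, ∀ w ∈ L (Sum.inr b), ∃ a, H.Adj (f a) w := by
      intro f hf
      exact (Finset.mem_filter.mp hf).2
    have hmemT : ∀ f ∈ Bad b, ∀ a, f a ∈ L (Sum.inl a) := by
      intro f hf a
      have : f ∈ T := (Finset.mem_filter.mp hf).1
      exact Fintype.mem_piFinset.mp this a
    set σ : (f : {f // f ∈ Bad b}) → {x // x ∈ L (Sum.inr b)} → Fin k :=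
      fun f w => (key f.1 f.2 w.1 w.2).choose with hσdef
    have hσadj : ∀ (f : {f // f ∈ Bad b}) (w : {x // x ∈ L (Sum.inr b)}),
        H.Adj (f.1 (σ f w)) w.1 := fun f w => (key f.1 f.2 w.1 w.2).choose_spec
    have hσinj : ∀ f, Function.Injective (σ f) := by
      intro f w w' h
      have h1 := hσadj f w
      have h2 := hσadj f w'
      rw [h] at h1
      have := hcov.matching (Sum.inl (σ f w')) (Sum.inr b) (hadjG _ _)
        (f.1 (σ f w')) (hmemT f.1 f.2 _) w.1 w.2 w'.1 w'.2 h1 h2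
      exact Subtype.ext this
    set Φ : {f // f ∈ Bad b} → ({x // x ∈ L (Sum.inr b)} ↪ Fin k) :=
      fun f => ⟨σ f, hσinj f⟩ with hΦdef
    have hΦinj : Function.Injective Φ := by
      intro f f' h
      have hfun : σ f = σ f' := congrArg (fun e => e.toFun) h
      have hbij : Function.Bijective (σ f) :=
        (Fintype.bijective_iff_injective_and_card (σ f)).mpr ⟨hσinj f, hcards⟩
      apply Subtype.ext
      funext a
      obtain ⟨w, hw⟩ := hbij.2 a
      have h1 : H.Adj (f.1 a) w.1 := by rw [← hw]; exact hσadj f w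
      have h2 : H.Adj (f'.1 a) w.1 := by
        rw [← hw, hfun]; exact hσadj f' w
      exact hcov.matching (Sum.inr b) (Sum.inl a) (hadjG a b).symm
        w.1 w.2 (f.1 a) (hmemT f.1 f.2 a) (f'.1 a) (hmemT f'.1 f'.2 a) h1.symm h2.symm
    calc (Bad b).card = Fintype.card {f // f ∈ Bad b} := (Fintype.card_coe _).symm
      _ ≤ Fintype.card ({x // x ∈ L (Sum.inr b)} ↪ Fin k) := Fintype.card_le_of_injective Φ hΦinj
      _ = k.factorial := by
          rw [Fintype.card_embedding_eq, hcards, Fintype.card_fin, Nat.descFactorial_self]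
  -- union bound
  set U : Finset (Fin k → W) := Finset.univ.biUnion Bad with hUdef
  have hUsub : U ⊆ T := by
    intro f hf
    rw [hUdef, Finset.mem_biUnion] at hf
    obtain ⟨b, _, hb⟩ := hf
    exact (Finset.mem_filter.mp hb).1
  have hUcard : U.card < T.card := by
    calc U.card ≤ ∑ b : Fin t, (Bad b).card := Finset.card_biUnion_le
      _ ≤ t * k.factorial := by
          calc ∑ b : Fin t, (Bad b).card ≤ ∑ _b : Fin t, k.factorial :=
                Finset.sum_le_sum (fun b _ => hBadcard b)
            _ = t * k.factorial := by simp [Finset.sum_const, Finset.card_univ, mul_comm]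
      _ < k ^ k := hlt
      _ = T.card := hTcard.symm
  have hne : (T \ U).Nonempty := by
    rw [← Finset.card_pos, Finset.card_sdiff_of_subset hUsub]
    omega
  obtain ⟨f, hfmem⟩ := hne
  have hfT : f ∈ T := (Finset.mem_sdiff.mp hfmem).1
  have hfU : f ∉ U := (Finset.mem_sdiff.mp hfmem).2
  have hfL : ∀ a, f a ∈ L (Sum.inl a) := Fintype.mem_piFinset.mp hfT
  have hgood : ∀ b : Fin t, ∃ w ∈ L (Sum.inr b), ∀ a, ¬ H.Adj (f a) w := by
    intro b
    by_contra h
    push_neg at h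
    apply hfU
    rw [hUdef, Finset.mem_biUnion]
    refine ⟨b, Finset.mem_univ b, Finset.mem_filter.mpr ⟨hfT, ?_⟩⟩
    intro w hw
    exact h w hw
  choose g hg1 hg2 using hgood
  refine ⟨Sum.elim f g, ?_, ?_⟩
  · intro u
    cases u with
    | inl a => exact hfL a
    | inr b => exact hg1 b
  · intro u v huv hadj
    have hcross := hcov.cross _ _ hadj u v
      (by cases u with | inl a => exact hfL a | inr b => exact hg1 b)
      (by cases v with | inl a => exact hfL a | inr b => exact hg1 b)
    rcases hcross with h | h
    · exact huv h
    · cases u with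
      | inl a =>
        cases v with
        | inl a' => simp [Kb] at h
        | inr b => exact hg2 b a hadj
      | inr b =>
        cases v with
        | inl a => exact hg2 b a hadj.symm
        | inr b' => simp [Kb] at h
end

section
/- For every k ≥ 1, if t ≥ k^k then there exists a list assignment L for K_{k,t} with |L(v)| = k for every vertex v such that K_{k,t} has no proper L-coloring; hence χ_ℓ(K_{k,t}) = k + 1. -/
open SimpleGraph Finset

/-- `G` is `k`-choosable: every assignment of lists of size `k` admits a proper coloring
from the lists. -/
def Choosable {V : Type*} (G : SimpleGraph V) (k : ℕ) : Prop :=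
  ∀ C : V → Finset ℕ, (∀ v, (C v).card = k) →
    ∃ f : V → ℕ, (∀ v, f v ∈ C v) ∧ ∀ u v : V, G.Adj u v → f u ≠ f v

/-- The list chromatic number: the least `k` such that `G` is `k`-choosable. -/
noncomputable def chiList {V : Type*} (G : SimpleGraph V) : ℕ := sInf {k | Choosable G k}


lemma bad_lists (k t j : ℕ) (hj : 1 ≤ j) (hjk : j ≤ k) (hjt : j ^ j ≤ t) :
    ∃ C : Fin k ⊕ Fin t → Finset ℕ, (∀ v, (C v).card = j) ∧
      ¬ ∃ f : Fin k ⊕ Fin t → ℕ, (∀ v, f v ∈ C v) ∧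
        ∀ u v, (Kb k t).Adj u v → f u ≠ f v := by
  have hcard : Fintype.card (Fin j → Fin j) = j ^ j := by simp
  let e : (Fin j → Fin j) ≃ Fin (j ^ j) := Fintype.equivFinOfCardEq hcard
  refine ⟨fun v => match v with
    | Sum.inl i => (range j).image (fun c => j * i.val + c)
    | Sum.inr y => if h : y.val < j ^ j then
        (univ : Finset (Fin j)).image (fun i => j * i.val + (e.symm ⟨y.val, h⟩ i).val)
      else range j, ?_, ?_⟩
  · rintro (i | y)
    · simp [Finset.card_image_of_injective _ (add_right_injective _)]
    · by_cases h : y.val < j ^ j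
      · simp only [h, dif_pos]
        rw [Finset.card_image_of_injective, Finset.card_univ, Fintype.card_fin]
        intro a b hab
        have ha : (j * a.val + (e.symm ⟨y.val, h⟩ a).val) / j = a.val := by
          rw [Nat.mul_add_div hj, Nat.div_eq_of_lt (e.symm ⟨y.val, h⟩ a).2, Nat.add_zero]
        have hb : (j * b.val + (e.symm ⟨y.val, h⟩ b).val) / j = b.val := by
          rw [Nat.mul_add_div hj, Nat.div_eq_of_lt (e.symm ⟨y.val, h⟩ b).2, Nat.add_zero]
        exact Fin.ext (by rw [← ha, ← hb]; exact congrArg (· / j) hab)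
      · simp [h]
  · rintro ⟨f, hf1, hf2⟩
    have hX : ∀ i : Fin j, ∃ c : Fin j, f (Sum.inl (Fin.castLE hjk i)) = j * i.val + c.val := by
      intro i
      have := hf1 (Sum.inl (Fin.castLE hjk i))
      simp only [Finset.mem_image, Finset.mem_range] at this
      obtain ⟨c, hc, hceq⟩ := this
      exact ⟨⟨c, hc⟩, hceq.symm⟩
    choose g hg using hX
    have hy : (e g).val < t := lt_of_lt_of_le (e g).2 hjt
    set y : Fin t := ⟨(e g).val, hy⟩ with hydef
    have hlt : y.val < j ^ j := (e g).2
    have hsymm : e.symm ⟨y.val, hlt⟩ = g := by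
      have : (⟨y.val, hlt⟩ : Fin (j ^ j)) = e g := rfl
      rw [this, Equiv.symm_apply_apply]
    have := hf1 (Sum.inr y)
    simp only [hlt, dif_pos, Finset.mem_image, Finset.mem_univ, true_and] at this
    obtain ⟨i, hi⟩ := this
    rw [hsymm] at hi
    have hadj : (Kb k t).Adj (Sum.inl (Fin.castLE hjk i)) (Sum.inr y) := by
      simp [Kb]
    exact hf2 _ _ hadj (by rw [hg i, ← hi])

lemma kb_choosable_succ (k t : ℕ) : Choosable (Kb k t) (k + 1) := by
  intro C hC
  have h1 : ∀ i : Fin k, ∃ c, c ∈ C (Sum.inl i) := by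
    intro i
    exact Finset.card_pos.mp (by rw [hC]; omega)
  choose fX hfX using h1
  have h2 : ∀ y : Fin t, ∃ c, c ∈ C (Sum.inr y) ∧ ∀ i, c ≠ fX i := by
    intro y
    have hlt : ((univ : Finset (Fin k)).image fX).card < (C (Sum.inr y)).card := by
      calc ((univ : Finset (Fin k)).image fX).card ≤ k := by
            simpa using Finset.card_image_le.trans (le_of_eq (by simp))
        _ < k + 1 := Nat.lt_succ_self k
        _ = (C (Sum.inr y)).card := (hC _).symm
    have hns : ¬ C (Sum.inr y) ⊆ (univ : Finset (Fin k)).image fX :=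
      fun hsub => absurd (Finset.card_le_card hsub) (not_le.mpr hlt)
    obtain ⟨c, hc1, hc2⟩ := Finset.not_subset.mp hns
    refine ⟨c, hc1, fun i hci => hc2 ?_⟩
    exact Finset.mem_image.mpr ⟨i, Finset.mem_univ i, hci.symm⟩
  choose fY hfY using h2
  refine ⟨Sum.elim fX fY, fun v => ?_, fun u v huv => ?_⟩
  · rcases v with i | y
    · exact hfX i
    · exact (hfY y).1
  · rcases u with i | y <;> rcases v with i' | y'
    · simp [Kb] at huv
    · exact fun h => (hfY y').2 i h.symm
    · exact (hfY y).2 i'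
    · simp [Kb] at huv

/-- **Hard direction of Theorem 1.** If `t ≥ k^k` then `K_{k,t}` admits a `k`-assignment
with no proper coloring from the lists; hence `χ_ℓ(K_{k,t}) = k + 1`. -/
theorem stmt_11 (k t : ℕ) (hk : 1 ≤ k) (ht : k ^ k ≤ t) :
    (∃ C : Fin k ⊕ Fin t → Finset ℕ, (∀ v, (C v).card = k) ∧
      ¬ ∃ f : Fin k ⊕ Fin t → ℕ, (∀ v, f v ∈ C v) ∧
        ∀ u v, (Kb k t).Adj u v → f u ≠ f v) ∧
    chiList (Kb k t) = k + 1 := by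
  refine ⟨bad_lists k t k hk le_rfl ht, ?_⟩
  apply le_antisymm
  · exact Nat.sInf_le (kb_choosable_succ k t)
  · refine le_csInf ⟨k + 1, kb_choosable_succ k t⟩ ?_
    intro b hb
    by_contra hbig
    push_neg at hbig
    have hbk : b ≤ k := by omega
    rcases Nat.eq_zero_or_pos b with hb0 | hb1
    · subst hb0
      obtain ⟨f, hf, -⟩ := hb (fun _ => ∅) (fun _ => rfl)
      exact absurd (hf (Sum.inl ⟨0, hk⟩)) (Finset.notMem_empty _)
    · have hbt : b ^ b ≤ t := by
        calc b ^ b ≤ k ^ b := Nat.pow_le_pow_left hbk b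
          _ ≤ k ^ k := Nat.pow_le_pow_right hk hbk
          _ ≤ t := ht
      obtain ⟨C, hC, hno⟩ := bad_lists k t b hb1 hbk hbt
      exact hno (hb C hC)
end

section
/- For every k ≥ 1 and every t < k^k, the complete bipartite graph K_{k,t} is k-choosable: for every list assignment L with |L(v)| = k for all v, K_{k,t} admits a proper L-coloring. -/
open SimpleGraph Finset

/-- **Easy direction of Theorem 1.** If `t < k^k` then `K_{k,t}` is `k`-choosable. -/
theorem stmt_12 (k t : ℕ) (hk : 1 ≤ k) (ht : t < k ^ k)
    (C : Fin k ⊕ Fin t → Finset ℕ) (hC : ∀ v, (C v).card = k) :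
    ∃ f : Fin k ⊕ Fin t → ℕ, (∀ v, f v ∈ C v) ∧
      ∀ u v, (Kb k t).Adj u v → f u ≠ f v := by
  have key : ∃ g : Fin k → ℕ, (∀ i, g i ∈ C (Sum.inl i)) ∧
      ∀ j : Fin t, ¬ C (Sum.inr j) ⊆ Finset.univ.image g := by
    by_cases hdisj : ∀ i i' : Fin k, i ≠ i' → ∀ a, a ∈ C (Sum.inl i) → a ∉ C (Sum.inl i')
    · -- left lists pairwise disjoint: the image map on tuples is injective
      set T := ∀ i : Fin k, {x // x ∈ C (Sum.inl i)} with hT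
      have cardT : Fintype.card T = k ^ k := by
        rw [Fintype.card_pi]
        simp [Fintype.card_coe, hC]
      set Φ : T → Finset ℕ := fun g => Finset.univ.image (fun i => (g i : ℕ)) with hΦdef
      have hΦinj : Function.Injective Φ := by
        intro g g' h
        funext i
        ext
        have hmem : (g i : ℕ) ∈ Φ g' := by
          rw [← h]; exact Finset.mem_image_of_mem _ (Finset.mem_univ i)
        obtain ⟨i'', -, hii⟩ := Finset.mem_image.mp hmem
        rcases eq_or_ne i'' i with rfl | hne
        · exact hii.symm
        · exact absurd ((g' i'').2) (by
            rw [hii]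
            intro hmem2
            exact hdisj i i'' (Ne.symm hne) _ (g i).2 hmem2)
      have hne : ¬ (Finset.univ.image Φ ⊆ Finset.univ.image (fun j : Fin t => C (Sum.inr j))) := by
        intro hsub
        have h1 : (Finset.univ.image Φ).card = k ^ k := by
          rw [Finset.card_image_of_injective _ hΦinj, Finset.card_univ, cardT]
        have h2 : (Finset.univ.image (fun j : Fin t => C (Sum.inr j))).card ≤ t :=
          Finset.card_image_le.trans (by simp)
        have := Finset.card_le_card hsub
        omega
      obtain ⟨S, hS, hSnot⟩ := Finset.not_subset.mp hne
      obtain ⟨g, -, rfl⟩ := Finset.mem_image.mp hS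
      refine ⟨fun i => (g i : ℕ), fun i => (g i).2, fun j hsub => ?_⟩
      have hcard : (Finset.univ.image (fun i => ((g i : ℕ)))).card ≤ k := by
        refine Finset.card_image_le.trans ?_
        simp
      have heq : C (Sum.inr j) = Φ g :=
        Finset.eq_of_subset_of_card_le hsub (by rw [hC]; exact hcard)
      exact hSnot (Finset.mem_image.mpr ⟨j, Finset.mem_univ j, heq⟩)
    · -- two left lists share an element `a`
      push_neg at hdisj
      obtain ⟨i, i', hne, a, hai, hai'⟩ := hdisj
      have hpick : ∀ j : Fin k, ∃ x, x ∈ C (Sum.inl j) := by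
        intro j
        have : 0 < (C (Sum.inl j)).card := by rw [hC]; omega
        exact Finset.card_pos.mp this |>.imp fun x hx => hx
      choose pick hpickmem using hpick
      set g : Fin k → ℕ := fun j => if j = i ∨ j = i' then a else pick j with hg
      have hgmem : ∀ j, g j ∈ C (Sum.inl j) := by
        intro j
        by_cases h : j = i ∨ j = i'
        · rcases h with rfl | rfl <;> simp [hg, hai, hai']
        · simp only [hg, if_neg h]; exact hpickmem j
      have himg : Finset.univ.image g ⊆ (Finset.univ.erase i').image g := by
        intro x hx
        obtain ⟨j, -, rfl⟩ := Finset.mem_image.mp hx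
        rcases eq_or_ne j i' with rfl | hji'
        · refine Finset.mem_image.mpr ⟨i, Finset.mem_erase.mpr ⟨hne, Finset.mem_univ i⟩, ?_⟩
          simp [hg]
        · exact Finset.mem_image.mpr ⟨j, Finset.mem_erase.mpr ⟨hji', Finset.mem_univ j⟩, rfl⟩
      have hcard : (Finset.univ.image g).card < k := by
        have h1 := Finset.card_le_card himg
        have h2 : ((Finset.univ.erase i').image g).card ≤ k - 1 := by
          refine Finset.card_image_le.trans ?_
          rw [Finset.card_erase_of_mem (Finset.mem_univ i'), Finset.card_univ, Fintype.card_fin]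
        omega
      refine ⟨g, hgmem, fun j hsub => ?_⟩
      have := Finset.card_le_card hsub
      rw [hC] at this
      omega
  obtain ⟨g, hgmem, hgood⟩ := key
  have hc : ∀ j : Fin t, ∃ x, x ∈ C (Sum.inr j) ∧ x ∉ Finset.univ.image g := fun j =>
    Finset.not_subset.mp (hgood j)
  choose c hcmem hcnot using hc
  refine ⟨Sum.elim g c, ?_, ?_⟩
  · rintro (i | j)
    · exact hgmem i
    · exact hcmem j
  · rintro (i | j) (i' | j') hadj <;>
      simp only [Kb, completeBipartiteGraph, SimpleGraph.Adj] at hadj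
    · simp at hadj
    · intro h
      simp only [Sum.elim_inl, Sum.elim_inr] at h
      exact hcnot j' (h ▸ Finset.mem_image_of_mem g (Finset.mem_univ i))
    · intro h
      simp only [Sum.elim_inl, Sum.elim_inr] at h
      exact hcnot j (h.symm ▸ Finset.mem_image_of_mem g (Finset.mem_univ i'))
    · simp at hadj
end
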